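/- Let p be an odd prime, ξ a primitive p-th root of unity, D(ξ) the diagonal matrix with entries ξⁱ (i = 0,...,p-1), and M_c the cyclic permutation matrix. If u ∈ SL(p,ℂ) satisfies π(u) commutes with π(D(ξ)) in PSL(p,ℂ) (i.e., [D(ξ),u] is a scalar matrix), then u = d·M_cᵏ for some diagonal matrix d ∈ SL(p,ℂ) and some 0 ≤ k ≤ p-1. Consequently the centralizer of the image of D(ξ) in PSL(p,ℂ) equals the image of the subgroup generated by the diagonal matrices of determinant 1 together with M_c. -/

import Mathlib

open Matrix
open scoped commutatorElement


lemma Mc_pow_apply (p : ℕ) [NeZero p] (M : Matrix (ZMod p) (ZMod p) ℂ)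
    (hM : M = Matrix.of fun i j : ZMod p => if i = j + 1 then (1 : ℂ) else 0) (k : ℕ) :
    M ^ k = Matrix.of fun i j : ZMod p => if i = j + (k : ZMod p) then (1 : ℂ) else 0 := by
  induction k with
  | zero =>
    ext i j
    simp [Matrix.one_apply, eq_comm]
  | succ k ih =>
    rw [pow_succ, ih, hM]
    ext i j
    simp only [Matrix.mul_apply, Matrix.of_apply]
    rw [Finset.sum_eq_single (j + 1)]
    · have h1 : j + ((k + 1 : ℕ) : ZMod p) = j + 1 + (k : ZMod p) := by push_cast; ring
      rw [h1]
      by_cases h : i = j + 1 + (k : ZMod p) <;> simp [h]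
    · intro l _ hl
      simp [hl]
    · simp

lemma extraction_aux (p : ℕ) [Fact p.Prime] (ξ : ℂ) (hξ : IsPrimitiveRoot ξ p)
    (Dm Mm : Matrix.SpecialLinearGroup (ZMod p) ℂ)
    (hD : (Dm : Matrix (ZMod p) (ZMod p) ℂ) = Matrix.diagonal fun i : ZMod p => ξ ^ i.val)
    (hM : (Mm : Matrix (ZMod p) (ZMod p) ℂ) =
      Matrix.of fun i j : ZMod p => if i = j + 1 then (1 : ℂ) else 0)
    (u : Matrix.SpecialLinearGroup (ZMod p) ℂ)
    (hu : ⁅Dm, u⁆ ∈ Subgroup.center (Matrix.SpecialLinearGroup (ZMod p) ℂ)) :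
    ∃ (d : Matrix (ZMod p) (ZMod p) ℂ) (k : ℕ), d.IsDiag ∧ d.det = 1 ∧ k ≤ p - 1 ∧
      (u : Matrix (ZMod p) (ZMod p) ℂ) = d * (Mm : Matrix (ZMod p) (ZMod p) ℂ) ^ k := by
  obtain ⟨ω, hω1, hωs⟩ := Matrix.SpecialLinearGroup.mem_center_iff.mp hu
  rw [ZMod.card p] at hω1
  obtain ⟨k, hk, hkξ⟩ := hξ.eq_pow_of_pow_eq_one hω1
  -- matrix-level relation
  have h1 : Dm * u = ⁅Dm, u⁆ * (u * Dm) := by group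
  have hmat : (Dm : Matrix (ZMod p) (ZMod p) ℂ) * u =
      Matrix.scalar (ZMod p) ω * ((u : Matrix (ZMod p) (ZMod p) ℂ) * Dm) := by
    have := congrArg (Subtype.val) h1
    simpa [Matrix.SpecialLinearGroup.coe_mul, ← hωs] using this
  have hent : ∀ i j : ZMod p, ξ ^ i.val * (u : Matrix (ZMod p) (ZMod p) ℂ) i j =
      ω * ((u : Matrix (ZMod p) (ZMod p) ℂ) i j * ξ ^ j.val) := by
    intro i j
    have := congrFun (congrFun hmat i) j
    simpa [hD, Matrix.scalar_apply, Matrix.diagonal_mul, Matrix.mul_diagonal] using this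
  have key : ∀ i j : ZMod p, i ≠ j + (k : ZMod p) →
      (u : Matrix (ZMod p) (ZMod p) ℂ) i j = 0 := by
    intro i j hij
    by_contra h0
    have heq : ξ ^ i.val = ω * ξ ^ j.val := by
      have := hent i j
      field_simp at this
      rcases mul_right_cancel₀ h0 (by linear_combination ((u : Matrix (ZMod p) (ZMod p) ℂ) i j) * this : ξ ^ i.val * (u : Matrix (ZMod p) (ZMod p) ℂ) i j = ω * ξ ^ j.val * (u : Matrix (ZMod p) (ZMod p) ℂ) i j) with h
      exact h
    rw [← hkξ, ← pow_add] at heq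
    have hord : orderOf ξ = p := hξ.eq_orderOf.symm
    have hp : 0 < p := (Fact.out : p.Prime).pos
    have e1 : ξ ^ (i.val % p) = ξ ^ i.val := by
      have h := pow_mod_orderOf (x := ξ) (n := i.val); rwa [hord] at h
    have e2 : ξ ^ ((k + j.val) % p) = ξ ^ (k + j.val) := by
      have h := pow_mod_orderOf (x := ξ) (n := k + j.val); rwa [hord] at h
    have hmod : i.val ≡ k + j.val [MOD p] :=
      hξ.pow_inj (Nat.mod_lt _ hp) (Nat.mod_lt _ hp) (e1.trans (heq.trans e2.symm))
    have : (i.val : ZMod p) = ((k + j.val : ℕ) : ZMod p) :=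
      (ZMod.natCast_eq_natCast_iff _ _ _).mpr hmod
    rw [ZMod.natCast_rightInverse i] at this
    push_cast at this
    rw [ZMod.natCast_rightInverse j] at this
    exact hij (by rw [this]; ring)
  have hMk := Mc_pow_apply p _ hM k
  set d : Matrix (ZMod p) (ZMod p) ℂ :=
    Matrix.diagonal (fun i => (u : Matrix (ZMod p) (ZMod p) ℂ) i (i - (k : ZMod p))) with hd
  have hueq : (u : Matrix (ZMod p) (ZMod p) ℂ) = d * (Mm : Matrix (ZMod p) (ZMod p) ℂ) ^ k := by
    ext i j
    rw [hMk, hd]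
    rw [Matrix.diagonal_mul]
    by_cases h : i = j + (k : ZMod p)
    · subst h
      simp [add_sub_cancel_right]
    · simp [Matrix.of_apply, h, key i j h]
  have hdetM : ((Mm : Matrix (ZMod p) (ZMod p) ℂ) ^ k).det = 1 := by
    rw [← Matrix.SpecialLinearGroup.coe_pow]
    exact (Mm ^ k).property
  have hdetd : d.det = 1 := by
    have h2 : (u : Matrix (ZMod p) (ZMod p) ℂ).det = d.det * 1 := by
      rw [hueq, Matrix.det_mul, hdetM]
    have h3 := u.property
    rw [h2] at h3
    simpa using h3
  exact ⟨d, k, Matrix.isDiag_diagonal _, hdetd, Nat.le_pred_of_lt hk, hueq⟩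


/-- Let `p` be an odd prime, `ξ` a primitive `p`-th root of unity,
`D(ξ) = diag(ξ⁰,…,ξ^{p-1})` and `M_c` the cyclic permutation matrix, both in `SL(p,ℂ)`.
If `u ∈ SL(p,ℂ)` has `[D(ξ), u]` central (i.e. the image of `u` in `PSL(p,ℂ)` commutes
with that of `D(ξ)`), then `u = d · M_cᵏ` for a diagonal `d ∈ SL(p,ℂ)` and `0 ≤ k ≤ p-1`.
Consequently, an element of `SL(p,ℂ)` commutes with `D(ξ)` modulo the center iff it lies
in the subgroup generated by the diagonal matrices of determinant `1` together with `M_c`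
(the `SL`-level form of `Z_{PSL(p,ℂ)}(D̄(ξ)) = D̄ ⋊ ⟨M̄_c⟩`). -/
theorem centralizer_of_Dxi (p : ℕ) [Fact p.Prime] (hodd : Odd p)
    (ξ : ℂ) (hξ : IsPrimitiveRoot ξ p)
    (Dm Mm : Matrix.SpecialLinearGroup (ZMod p) ℂ)
    (hD : (Dm : Matrix (ZMod p) (ZMod p) ℂ) = Matrix.diagonal fun i : ZMod p => ξ ^ i.val)
    (hM : (Mm : Matrix (ZMod p) (ZMod p) ℂ) =
      Matrix.of fun i j : ZMod p => if i = j + 1 then (1 : ℂ) else 0)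
    (u : Matrix.SpecialLinearGroup (ZMod p) ℂ)
    (hu : ⁅Dm, u⁆ ∈ Subgroup.center (Matrix.SpecialLinearGroup (ZMod p) ℂ)) :
    (∃ (d : Matrix (ZMod p) (ZMod p) ℂ) (k : ℕ), d.IsDiag ∧ d.det = 1 ∧ k ≤ p - 1 ∧
        (u : Matrix (ZMod p) (ZMod p) ℂ) = d * (Mm : Matrix (ZMod p) (ZMod p) ℂ) ^ k) ∧
    (∀ v : Matrix.SpecialLinearGroup (ZMod p) ℂ,
        ⁅Dm, v⁆ ∈ Subgroup.center (Matrix.SpecialLinearGroup (ZMod p) ℂ) ↔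
          v ∈ Subgroup.closure
            ({x : Matrix.SpecialLinearGroup (ZMod p) ℂ |
                (x : Matrix (ZMod p) (ZMod p) ℂ).IsDiag} ∪ {Mm})) := by
  classical
  refine ⟨extraction_aux p ξ hξ Dm Mm hD hM u hu, ?_⟩
  have hchar : ∀ w : Matrix.SpecialLinearGroup (ZMod p) ℂ, (⁅Dm, w⁆ ∈ Subgroup.center (Matrix.SpecialLinearGroup (ZMod p) ℂ)) ↔
      Commute ((QuotientGroup.mk' (Subgroup.center (Matrix.SpecialLinearGroup (ZMod p) ℂ))) Dm) ((QuotientGroup.mk' (Subgroup.center (Matrix.SpecialLinearGroup (ZMod p) ℂ))) w) := by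
    intro w
    rw [← commutatorElement_eq_one_iff_commute, ← map_commutatorElement,
      ← MonoidHom.mem_ker, QuotientGroup.ker_mk']
  intro v
  constructor
  · intro hv
    obtain ⟨d, k, hdiag, hdet, _, heq⟩ := extraction_aux p ξ hξ Dm Mm hD hM v hv
    let dS : Matrix.SpecialLinearGroup (ZMod p) ℂ := ⟨d, hdet⟩
    have hveq : v = dS * Mm ^ k := by
      apply Subtype.ext
      simp only [Matrix.SpecialLinearGroup.coe_mul, Matrix.SpecialLinearGroup.coe_pow]
      exact heq
    rw [hveq]
    have h1 : dS ∈ ({x : Matrix.SpecialLinearGroup (ZMod p) ℂ |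
          (x : Matrix (ZMod p) (ZMod p) ℂ).IsDiag} ∪ {Mm}) := Set.mem_union_left _ hdiag
    have h2 : Mm ∈ ({x : Matrix.SpecialLinearGroup (ZMod p) ℂ |
          (x : Matrix (ZMod p) (ZMod p) ℂ).IsDiag} ∪ {Mm}) := Set.mem_union_right _ rfl
    exact mul_mem (Subgroup.subset_closure h1) (pow_mem (Subgroup.subset_closure h2) k)
  · intro hv
    refine (hchar v).mpr ?_
    refine Subgroup.closure_induction (fun x hx => ?_) (by simpa using Commute.one_right _)
      (fun x y _ _ hx hy => by simpa [_root_.map_mul] using hx.mul_right hy)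
      (fun x _ hx => by simpa [map_inv] using hx.inv_right) hv
    rcases hx with hx | hx
    · -- diagonal case
      refine ((hchar x).mp ?_)
      have hcom : Dm * x = x * Dm := by
        apply Subtype.ext
        simp only [Matrix.SpecialLinearGroup.coe_mul]
        rw [← hx.diagonal_diag, hD, Matrix.diagonal_mul_diagonal,
          Matrix.diagonal_mul_diagonal]
        simp [mul_comm]
      rw [commutatorElement_def, hcom]
      simpa using Subgroup.one_mem _
    · -- x = Mm
      rw [Set.mem_singleton_iff] at hx
      rw [hx]
      refine (hchar Mm).mp ?_
      have hdetC : (Matrix.scalar (ZMod p) ξ).det = 1 := by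
        have : Matrix.scalar (ZMod p) ξ = Matrix.diagonal (fun _ : ZMod p => ξ) := rfl
        rw [this, Matrix.det_diagonal]
        simp [ZMod.card, hξ.pow_eq_one]
      set C : Matrix.SpecialLinearGroup (ZMod p) ℂ := ⟨Matrix.scalar (ZMod p) ξ, hdetC⟩ with hC
      have hord : orderOf ξ = p := hξ.eq_orderOf.symm
      have hc : Dm * Mm = C * (Mm * Dm) := by
        apply Subtype.ext
        simp only [Matrix.SpecialLinearGroup.coe_mul]
        have hsc : Matrix.scalar (ZMod p) ξ = Matrix.diagonal (fun _ : ZMod p => ξ) := rfl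
        rw [hD, hM, show (C : Matrix (ZMod p) (ZMod p) ℂ) = Matrix.diagonal (fun _ : ZMod p => ξ) from rfl]
        ext i j
        simp only [Matrix.diagonal_mul, Matrix.mul_diagonal, Matrix.of_apply]
        by_cases h : i = j + 1
        · subst h
          have hv1 : (j + 1 : ZMod p).val = (j.val + 1) % p := by
            rw [ZMod.val_add, ZMod.val_one]
          have e1 : ξ ^ ((j.val + 1) % p) = ξ ^ (j.val + 1) := by
            have h := pow_mod_orderOf (x := ξ) (n := j.val + 1); rwa [hord] at h
          simp only [if_pos rfl, mul_one, one_mul, hv1, e1]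
          rw [pow_succ]; ring
        · simp [if_neg h]
      have hcomm : ⁅Dm, Mm⁆ = C := by
        have h2 : ⁅Dm, Mm⁆ = (Dm * Mm) * (Mm * Dm)⁻¹ := by group
        rw [h2, hc, mul_assoc, mul_inv_cancel, mul_one]
      rw [hcomm]
      exact Matrix.SpecialLinearGroup.mem_center_iff.mpr
        ⟨ξ, by rw [ZMod.card]; exact hξ.pow_eq_one, rfl⟩
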